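/- For t ≥ 2 and n ≥ t - 2, the (t-2)-th power of the n-vertex path contains exactly 2^{t-2}(n - t + 3) cliques (including the empty set). -/

import Mathlib

/-- The `k`-th power of the path on `n` vertices `0, 1, …, n-1`: two distinct vertices
are adjacent iff their distance is at most `k`. -/
def pathPower (n k : ℕ) : SimpleGraph (Fin n) where
  Adj i j := i ≠ j ∧ i.val ≤ j.val + k ∧ j.val ≤ i.val + k
  symm := ⟨fun i j ⟨h1, h2, h3⟩ => ⟨h1.symm, h3, h2⟩⟩
  loopless := ⟨fun i h => h.1 rfl⟩

/-- The clique condition transported to finsets of naturals. -/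
def cliqueCond (k : ℕ) (s : Finset ℕ) : Prop := ∀ i ∈ s, ∀ j ∈ s, i ≤ j + k

instance (k : ℕ) : DecidablePred (cliqueCond k) := fun _ => by
  unfold cliqueCond; infer_instance

lemma count_nat (k : ℕ) : ∀ n, k ≤ n →
    (((Finset.range n).powerset).filter (cliqueCond k)).card = 2 ^ k * (n + 1 - k) := by
  intro n h
  induction n, h using Nat.le_induction with
  | base =>
    rw [Finset.filter_eq_self.mpr]
    · rw [Finset.card_powerset, Finset.card_range]
      have : k + 1 - k = 1 := by omega
      rw [this, mul_one]
    · intro s hs i hi j hj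
      have : i < k := Finset.mem_range.mp (Finset.mem_powerset.mp hs hi)
      omega
  | succ n hn ih =>
    have hinj : ∀ a ∈ (Finset.range n).powerset, ∀ b ∈ (Finset.range n).powerset,
        insert n a = insert n b → a = b := by
      intro a ha b hb hab
      have hna : n ∉ a := fun h => by
        have := Finset.mem_range.mp (Finset.mem_powerset.mp ha h); omega
      have hnb : n ∉ b := fun h => by
        have := Finset.mem_range.mp (Finset.mem_powerset.mp hb h); omega
      have := congrArg (Finset.erase · n) hab
      simpa [Finset.erase_insert hna, Finset.erase_insert hnb] using this
    rw [Finset.range_add_one, Finset.powerset_insert, Finset.filter_union,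
      Finset.card_union_of_disjoint, ih]
    · have himg : ((Finset.range n).powerset.image (insert n)).filter (cliqueCond k)
          = (((Finset.range n).powerset.filter (fun t => cliqueCond k (insert n t))).image
              (insert n)) := by
        ext x
        simp only [Finset.mem_filter, Finset.mem_image]
        constructor
        · rintro ⟨⟨t, ht, rfl⟩, hcl⟩
          exact ⟨t, ⟨ht, hcl⟩, rfl⟩
        · rintro ⟨t, ⟨ht, hcl⟩, rfl⟩
          exact ⟨⟨t, ht, rfl⟩, hcl⟩
      rw [himg, Finset.card_image_of_injOn (fun a ha b hb =>
        hinj a (Finset.mem_filter.mp ha).1 b (Finset.mem_filter.mp hb).1)]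
      have hset : (Finset.range n).powerset.filter (fun t => cliqueCond k (insert n t))
          = (Finset.Ico (n - k) n).powerset := by
        ext t
        simp only [Finset.mem_filter, Finset.mem_powerset]
        constructor
        · rintro ⟨ht, hcl⟩ i hi
          have h1 : i < n := Finset.mem_range.mp (ht hi)
          have h2 : n ≤ i + k := hcl n (Finset.mem_insert_self _ _) i
            (Finset.mem_insert_of_mem hi)
          exact Finset.mem_Ico.mpr ⟨by omega, h1⟩
        · intro ht
          constructor
          · intro i hi
            exact Finset.mem_range.mpr (Finset.mem_Ico.mp (ht hi)).2
          · intro i hi j hj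
            rcases Finset.mem_insert.mp hi with rfl | hi'
            · rcases Finset.mem_insert.mp hj with rfl | hj'
              · omega
              · have := Finset.mem_Ico.mp (ht hj'); omega
            · have hi'' := Finset.mem_Ico.mp (ht hi')
              rcases Finset.mem_insert.mp hj with rfl | hj'
              · omega
              · have := Finset.mem_Ico.mp (ht hj'); omega
      rw [hset, Finset.card_powerset, Nat.card_Ico]
      have h1 : n - (n - k) = k := by omega
      rw [h1]
      have h2 : n + 1 + 1 - k = (n + 1 - k) + 1 := by omega
      rw [h2, mul_add, mul_one]
    · rw [Finset.disjoint_left]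
      intro x hx hx'
      have h1 := Finset.mem_powerset.mp (Finset.mem_filter.mp hx).1
      obtain ⟨t, _, rfl⟩ := Finset.mem_image.mp (Finset.mem_filter.mp hx').1
      have := Finset.mem_range.mp (h1 (Finset.mem_insert_self n t))
      omega

lemma transfer (n k : ℕ) :
    Nat.card {s : Finset (Fin n) // (pathPower n k).IsClique (s : Set (Fin n))} =
      (((Finset.range n).powerset).filter (cliqueCond k)).card := by
  have hiff : ∀ s : Finset (Fin n),
      (pathPower n k).IsClique (s : Set (Fin n)) ↔
        ∀ i ∈ s, ∀ j ∈ s, (i : ℕ) ≤ (j : ℕ) + k := by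
    intro s
    constructor
    · intro h i hi j hj
      by_cases hij : i = j
      · subst hij; omega
      · exact (h (by exact_mod_cast hi) (by exact_mod_cast hj) hij).2.1
    · intro h i hi j hj hij
      exact ⟨hij, h i (by exact_mod_cast hi) j (by exact_mod_cast hj),
        h j (by exact_mod_cast hj) i (by exact_mod_cast hi)⟩
  rw [Nat.card_congr (Equiv.subtypeEquivRight hiff), Nat.card_eq_fintype_card,
    Fintype.card_subtype]
  refine Finset.card_bij (fun s _ => s.map Fin.valEmbedding) ?_ ?_ ?_
  · intro s hs
    rw [Finset.mem_filter]
    constructor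
    · rw [Finset.mem_powerset]
      intro m hm
      obtain ⟨a, _, rfl⟩ := Finset.mem_map.mp hm
      exact Finset.mem_range.mpr a.isLt
    · intro i hi j hj
      obtain ⟨a, ha, rfl⟩ := Finset.mem_map.mp hi
      obtain ⟨b, hb, rfl⟩ := Finset.mem_map.mp hj
      exact (Finset.mem_filter.mp hs).2 a ha b hb
  · intro a _ b _ hab
    exact Finset.map_injective _ hab
  · intro t ht
    have htm := Finset.mem_filter.mp ht
    have hlt : ∀ m ∈ t, m < n := fun m hm =>
      Finset.mem_range.mp (Finset.mem_powerset.mp htm.1 hm)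
    refine ⟨t.attachFin hlt, ?_, ?_⟩
    · rw [Finset.mem_filter]
      refine ⟨Finset.mem_univ _, ?_⟩
      intro i hi j hj
      exact htm.2 i (Finset.mem_attachFin hlt |>.mp hi) j
        (Finset.mem_attachFin hlt |>.mp hj)
    · ext m
      simp only [Finset.mem_map, Finset.mem_attachFin, Fin.valEmbedding_apply]
      constructor
      · rintro ⟨a, ha, rfl⟩; exact ha
      · intro hm; exact ⟨⟨m, hlt m hm⟩, hm, rfl⟩

/-- For `t ≥ 2` and `n ≥ t - 2`, the `(t-2)`-th power of the `n`-vertex path has exactly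
`2^{t-2}·(n - t + 3)` cliques (including the empty set). -/
theorem clique_count_pathPower {n t : ℕ} (ht : 2 ≤ t) (hn : t - 2 ≤ n) :
    Nat.card {s : Finset (Fin n) // (pathPower n (t - 2)).IsClique (s : Set (Fin n))} =
      2 ^ (t - 2) * (n + 3 - t) := by
  rw [transfer, count_nat (t - 2) n hn]
  congr 1
  omega
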